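/- Let k ≥ 1 be an integer, let ε ∈ (0,1) be real, and let β be a nonnegative real-valued function on the nonempty subsets of {1,…,k} with ε·∑_{T ≠ ∅} β(T) ≤ 1. Define π on subsets of {1,…,k} by π(T) = ε·β(T) for T ≠ ∅ and π(∅) = 1 − ε·∑_{T ≠ ∅} β(T). Then the entropy satisfies H(π) = ∑_T −π(T)·log π(T) ≤ ε·log(1/ε)·∑_{T ≠ ∅} β(T) + ε·∑_{T ≠ ∅} β(T) + (2^k − 1)·ε/e. -/

import Mathlib

open Finset

lemma negMulLog_le_inv_e {x : ℝ} (hx : 0 ≤ x) : Real.negMulLog x ≤ (Real.exp 1)⁻¹ := by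
  rcases eq_or_lt_of_le hx with h | h
  · simp [← h]
    positivity
  · have hlog : Real.log x⁻¹ ≤ (Real.exp 1 * x)⁻¹ := by
      have h1 : Real.log ((Real.exp 1 * x)⁻¹) ≤ (Real.exp 1 * x)⁻¹ - 1 :=
        Real.log_le_sub_one_of_pos (by positivity)
      have h2 : Real.log ((Real.exp 1 * x)⁻¹) = -1 - Real.log x := by
        rw [Real.log_inv, Real.log_mul (Real.exp_ne_zero 1) (ne_of_gt h), Real.log_exp]
        ring
      rw [Real.log_inv]
      nlinarith [(Real.exp 1 * x)⁻¹, h1, h2]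
    have : Real.negMulLog x = x * Real.log x⁻¹ := by
      rw [Real.negMulLog, Real.log_inv]; ring
    rw [this]
    calc x * Real.log x⁻¹ ≤ x * (Real.exp 1 * x)⁻¹ := by
          exact mul_le_mul_of_nonneg_left hlog hx
      _ = (Real.exp 1)⁻¹ := by
          field_simp
      _ ≤ (Real.exp 1)⁻¹ := le_refl _

lemma negMulLog_one_sub_le {x : ℝ} (hx0 : 0 ≤ x) (hx1 : x ≤ 1) :
    Real.negMulLog (1 - x) ≤ x := by
  rcases eq_or_lt_of_le hx1 with h | h
  · simp [← h, hx0]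
  · have hy : 0 < 1 - x := by linarith
    have hlog : Real.log (1 - x)⁻¹ ≤ (1 - x)⁻¹ - 1 :=
      Real.log_le_sub_one_of_pos (by positivity)
    have : Real.negMulLog (1 - x) = (1 - x) * Real.log (1 - x)⁻¹ := by
      rw [Real.negMulLog, Real.log_inv]; ring
    rw [this]
    calc (1 - x) * Real.log (1 - x)⁻¹ ≤ (1 - x) * ((1 - x)⁻¹ - 1) :=
          mul_le_mul_of_nonneg_left hlog (le_of_lt hy)
      _ = x := by field_simp; ring

/-- For `ε ∈ (0,1)` and nonnegative `β` on nonempty subsets of `{1,…,k}`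
with `ε ∑_{T≠∅} β(T) ≤ 1`, the probability vector `π` with `π(T) = ε β(T)` for `T ≠ ∅` and
`π(∅) = 1 − ε ∑_{T≠∅} β(T)` satisfies
`H(π) ≤ ε log(1/ε) ∑_{T≠∅} β(T) + ε ∑_{T≠∅} β(T) + (2^k − 1) ε / e`. -/
theorem entropy_upper_bound_small_density (k : ℕ) (hk : 1 ≤ k)
    (ε : ℝ) (hε0 : 0 < ε) (hε1 : ε < 1)
    (β : Finset (Fin k) → ℝ)
    (hβ_nonneg : ∀ T : Finset (Fin k), T ≠ ∅ → 0 ≤ β T)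
    (hsum : ε * (∑ T ∈ univ.filter (fun T : Finset (Fin k) => T ≠ ∅), β T) ≤ 1)
    (p : Finset (Fin k) → ℝ)
    (hp : ∀ T : Finset (Fin k),
      p T = if T = ∅ then
          1 - ε * (∑ T' ∈ univ.filter (fun T' : Finset (Fin k) => T' ≠ ∅), β T')
        else ε * β T) :
    ∑ T : Finset (Fin k), Real.negMulLog (p T) ≤
      ε * Real.log (1 / ε) * (∑ T ∈ univ.filter (fun T : Finset (Fin k) => T ≠ ∅), β T) +
        ε * (∑ T ∈ univ.filter (fun T : Finset (Fin k) => T ≠ ∅), β T) +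
        ((2 : ℝ) ^ k - 1) * ε / Real.exp 1 := by
  classical
  set s := univ.filter (fun T : Finset (Fin k) => T ≠ ∅) with hs
  set S := ∑ T ∈ s, β T with hS
  have hs_eq : s = (univ : Finset (Finset (Fin k))).erase ∅ := by
    rw [hs]
    ext T; simp [Finset.mem_erase, and_comm]
  have hS_nonneg : 0 ≤ S := Finset.sum_nonneg fun T hT => by
    rw [hs, Finset.mem_filter] at hT; exact hβ_nonneg T hT.2
  -- split the sum
  have hsplit : ∑ T : Finset (Fin k), Real.negMulLog (p T)
      = Real.negMulLog (p ∅) + ∑ T ∈ s, Real.negMulLog (p T) := by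
    rw [hs_eq]
    exact (Finset.add_sum_erase univ (fun T => Real.negMulLog (p T)) (mem_univ ∅)).symm
  rw [hsplit]
  have hp0 : p ∅ = 1 - ε * S := by rw [hp]; simp [hS, hs]
  have hεS : 0 ≤ ε * S := by positivity
  have h1 : Real.negMulLog (p ∅) ≤ ε * S := by
    rw [hp0]; exact negMulLog_one_sub_le hεS hsum
  have h2 : ∑ T ∈ s, Real.negMulLog (p T)
      ≤ ε * Real.log (1 / ε) * S + (s.card : ℝ) * (ε * (Real.exp 1)⁻¹) := by
    have : ∀ T ∈ s, Real.negMulLog (p T)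
        ≤ ε * Real.log (1 / ε) * β T + ε * (Real.exp 1)⁻¹ := by
      intro T hT
      have hTne : T ≠ ∅ := by rw [hs, Finset.mem_filter] at hT; exact hT.2
      have hβT := hβ_nonneg T hTne
      rw [hp, if_neg hTne, Real.negMulLog_mul]
      have ha : β T * Real.negMulLog ε = ε * Real.log (1 / ε) * β T := by
        rw [Real.negMulLog, one_div, Real.log_inv]; ring
      have hb : ε * Real.negMulLog (β T) ≤ ε * (Real.exp 1)⁻¹ :=
        mul_le_mul_of_nonneg_left (negMulLog_le_inv_e hβT) (le_of_lt hε0)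
      linarith [ha, hb]
    calc ∑ T ∈ s, Real.negMulLog (p T)
        ≤ ∑ T ∈ s, (ε * Real.log (1 / ε) * β T + ε * (Real.exp 1)⁻¹) :=
          Finset.sum_le_sum this
      _ = ε * Real.log (1 / ε) * S + (s.card : ℝ) * (ε * (Real.exp 1)⁻¹) := by
          rw [Finset.sum_add_distrib, ← Finset.mul_sum, Finset.sum_const, nsmul_eq_mul]
  have hcard : (s.card : ℝ) = (2 : ℝ) ^ k - 1 := by
    rw [hs_eq, Finset.card_erase_of_mem (mem_univ ∅), Finset.card_univ]
    have : Fintype.card (Finset (Fin k)) = 2 ^ k := by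
      simp [Fintype.card_finset, Fintype.card_fin]
    rw [this]
    have h2k : 1 ≤ 2 ^ k := Nat.one_le_two_pow
    push_cast [Nat.cast_sub h2k]
    ring
  rw [hcard] at h2
  have : ((2 : ℝ) ^ k - 1) * (ε * (Real.exp 1)⁻¹) = ((2 : ℝ) ^ k - 1) * ε / Real.exp 1 := by
    ring
  rw [this] at h2
  linarith
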